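/- If a finitely generated torsion-free group G decomposes as a nontrivial free product G = A * B (with A and B nontrivial), then the outer automorphism group Out(G) is infinite. -/

import Mathlib

open Monoid Monoid.CoprodI

abbrev Monoid.IsTorsionFree (G : Type*) [Monoid G] : Prop := ∀ g : G, g ≠ 1 → ¬IsOfFinOrder g

namespace Stmt18Aux

variable {ι : Type*} {M : ι → Type*} [∀ i, Group (M i)]

theorem word_prod_injective : Function.Injective (Monoid.CoprodI.Word.prod (M := M)) := by
  classical
  exact (Word.equiv (M := M)).symm.injective

theorem neWord_conj_not_in_range {i k l : ι} (hl : l ≠ i)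
    (w : NeWord M k l) {a : M i} (ha : a ≠ 1) :
    w.prod * of a * w.prod⁻¹ ∉ Set.range (of : M i →* _) := by
  classical
  rintro ⟨a', ha'⟩
  have hof : (of a : CoprodI M) ≠ 1 := by
    simpa using (of_injective i (M := M)).ne_iff' (map_one _) |>.2 ha
  have ha'1 : a' ≠ 1 := by
    rintro rfl
    rw [map_one] at ha'
    apply hof
    have h2 : w.prod * of a = w.prod := by
      have := congrArg (· * w.prod) ha'.symm
      simpa [mul_assoc] using this
    exact mul_eq_left.mp h2
  set W : NeWord M k k :=
    NeWord.append (NeWord.append w hl (NeWord.singleton a ha)) hl.symm w.inv with hW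
  have hWprod : W.prod = of a' := by
    rw [hW]
    rw [NeWord.append_prod, NeWord.append_prod, NeWord.prod_singleton, NeWord.inv_prod, ← ha']
  have hsing : (NeWord.singleton a' ha'1).prod = of a' := NeWord.prod_singleton _ _
  have : W.toWord = (NeWord.singleton a' ha'1).toWord :=
    word_prod_injective (by rw [← NeWord.prod, ← NeWord.prod, hWprod, hsing])
  have hlist := congrArg (fun w => w.toList.length) this
  simp only [NeWord.toWord] at hlist
  have h1 : w.toList ≠ [] := NeWord.toList_ne_nil w
  simp only [hW, NeWord.toList, List.length_append, List.length_singleton] at hlist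
  have : w.toList.length ≠ 0 := fun h => h1 (List.length_eq_zero_iff.mp h)
  omega

end Stmt18Aux

namespace Stmt18Aux

open Monoid Monoid.CoprodI

variable {ι : Type*} {M : ι → Type*} [∀ i, Group (M i)]

theorem eq_of_conj_mem_range {g : CoprodI M} {i : ι} {a : M i} (ha : a ≠ 1)
    (h : g * of a * g⁻¹ ∈ Set.range (of : M i →* _)) : ∃ c : M i, g = of c := by
  classical
  obtain ⟨a', ha'⟩ := h
  have hof : (of a : CoprodI M) ≠ 1 := by
    simpa using (of_injective i (M := M)).ne_iff' (map_one _) |>.2 ha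
  have ha'1 : a' ≠ 1 := by
    rintro rfl
    rw [map_one] at ha'
    have h2 : g * of a = g := by
      have := congrArg (· * g) ha'.symm
      simpa [mul_assoc] using this
    exact hof (mul_eq_left.mp h2)
  set wrd := Word.equiv (M := M) g with hwrd
  have hg : wrd.prod = g := (Word.equiv (M := M)).symm_apply_apply g
  set p := Word.equivPair i wrd with hp
  have hrcons : Word.rcons p = wrd := by
    rw [hp, ← Word.equivPair_symm]
    exact (Word.equivPair i).symm_apply_apply wrd
  have hgdecomp : g = of p.head * p.tail.prod := by
    rw [← hg, ← hrcons, Word.prod_rcons]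
  by_cases htail : p.tail.toList = []
  · refine ⟨p.head, ?_⟩
    have ht1 : p.tail.prod = 1 := by
      rw [Word.prod, htail]; rfl
    rw [hgdecomp, ht1, mul_one]
  · obtain ⟨k', l', w', hw'⟩ := NeWord.of_word p.tail (by
      intro hemp
      apply htail
      rw [hemp]; rfl)
    have hlist : w'.toList = p.tail.toList := congrArg Word.toList hw'
    have hfst : p.tail.fstIdx = some k' := by
      rw [Word.fstIdx, ← hlist, NeWord.toList_head?]
      rfl
    have hk' : k' ≠ i := by
      intro hki
      exact p.fstIdx_ne (by rw [hfst, hki])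
    have hyprod : w'.prod = p.tail.prod := by
      rw [NeWord.prod, hw']
    have heq : w'.prod * of a * w'.prod⁻¹ = of (p.head⁻¹ * a' * p.head) := by
      rw [hyprod]
      have key : of p.head * (p.tail.prod * of a * p.tail.prod⁻¹) * (of p.head)⁻¹ = of a' := by
        rw [ha', hgdecomp]
        simp [mul_assoc, mul_inv_rev]
      rw [map_mul, map_mul, map_inv]
      rw [← key]
      simp [mul_assoc]
    have ha'' : p.head⁻¹ * a' * p.head ≠ 1 := by
      intro h1
      apply ha'1
      have := congrArg (fun x => p.head * x * p.head⁻¹) h1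
      simpa [mul_assoc] using this
    by_cases hl' : l' = i
    · subst hl'
      exfalso
      apply neWord_conj_not_in_range hk' w'.inv ha''
      refine ⟨a, ?_⟩
      rw [NeWord.inv_prod, inv_inv]
      have := congrArg (fun x => w'.prod⁻¹ * x * w'.prod) heq
      simp only [mul_assoc] at this ⊢
      simp only [inv_mul_cancel_left] at this
      rw [← this]
      simp [mul_assoc]
    · exfalso
      exact neWord_conj_not_in_range hl' w' ha ⟨_, heq.symm⟩

end Stmt18Aux


open Monoid Monoid.CoprodI

namespace Stmt18Aux

variable {ι : Type*} {M : ι → Type*} [∀ i, Group (M i)]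

universe u v

variable {A : Type u} {B : Type v} [Group A] [Group B]

abbrev Fb (A : Type u) (B : Type v) : Bool → Type (max u v) :=
  fun b => cond b (ULift.{v} A) (ULift.{u} B)

instance (A : Type u) (B : Type v) [Group A] [Group B] : ∀ b, Group (Fb A B b)
  | true => inferInstanceAs (Group (ULift.{v} A))
  | false => inferInstanceAs (Group (ULift.{u} B))

def toI : Coprod A B →* CoprodI (Fb A B) :=
  Coprod.lift
    ((CoprodI.of (M := Fb A B) (i := true)).comp (MulEquiv.ulift.symm : A ≃* ULift.{v} A).toMonoidHom)
    ((CoprodI.of (M := Fb A B) (i := false)).comp (MulEquiv.ulift.symm : B ≃* ULift.{u} B).toMonoidHom)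

def ofI : CoprodI (Fb A B) →* Coprod A B :=
  CoprodI.lift fun b => match b with
    | true => (Coprod.inl : A →* Coprod A B).comp (MulEquiv.ulift : ULift.{v} A ≃* A).toMonoidHom
    | false => (Coprod.inr : B →* Coprod A B).comp (MulEquiv.ulift : ULift.{u} B ≃* B).toMonoidHom

@[simp] theorem toI_inl (a : A) :
    (toI (Coprod.inl a) : CoprodI (Fb A B)) = of (M := Fb A B) (i := true) (ULift.up.{v} a) :=
  Coprod.lift_apply_inl _ _ _

@[simp] theorem toI_inr (b : B) :
    (toI (Coprod.inr b) : CoprodI (Fb A B)) = of (M := Fb A B) (i := false) (ULift.up.{u} b) :=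
  Coprod.lift_apply_inr _ _ _

@[simp] theorem ofI_of_true (a : ULift.{v} A) :
    ofI (of (M := Fb A B) (i := true) a) = Coprod.inl a.down :=
  CoprodI.lift_of _ _

@[simp] theorem ofI_of_false (b : ULift.{u} B) :
    ofI (of (M := Fb A B) (i := false) b) = Coprod.inr b.down :=
  CoprodI.lift_of _ _

theorem ofI_toI (x : Coprod A B) : ofI (toI x) = x := by
  have : (ofI.comp (toI : Coprod A B →* CoprodI (Fb A B))) = MonoidHom.id _ := by
    apply Coprod.hom_ext
    · ext a
      simp only [MonoidHom.comp_apply, MonoidHom.id_apply, toI_inl]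
      exact ofI_of_true _
    · ext b
      simp only [MonoidHom.comp_apply, MonoidHom.id_apply, toI_inr]
      exact ofI_of_false _
  exact DFunLike.congr_fun this x

theorem exists_inl_of_commute [Nontrivial A] {g : Coprod A B}
    (h : ∀ a : A, g * Coprod.inl a = Coprod.inl a * g) : ∃ a₀ : A, g = Coprod.inl a₀ := by
  obtain ⟨a, ha⟩ := exists_ne (1 : A)
  have ha' : (ULift.up a : ULift.{v} A) ≠ 1 := by
    simp [ULift.ext_iff, ha]
  have hmem : toI g * of (M := Fb A B) (i := true) (ULift.up.{v} a) * (toI g)⁻¹ ∈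
      Set.range (of : Fb A B true →* _) := by
    refine ⟨ULift.up.{v} a, ?_⟩
    rw [← toI_inl, ← map_mul, h a, map_mul, mul_assoc, mul_inv_cancel, mul_one, toI_inl]
  obtain ⟨c, hc⟩ := eq_of_conj_mem_range (M := Fb A B) (i := true) ha' hmem
  refine ⟨c.down, ?_⟩
  have := congrArg ofI hc
  rwa [ofI_toI, ofI_of_true] at this

theorem exists_inr_of_commute [Nontrivial B] {g : Coprod A B}
    (h : ∀ b : B, g * Coprod.inr b = Coprod.inr b * g) : ∃ b₀ : B, g = Coprod.inr b₀ := by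
  have h' : ∀ b : B, Coprod.swap A B g * Coprod.inl b = Coprod.inl b * Coprod.swap A B g := by
    intro b
    have := congrArg (Coprod.swap A B) (h b)
    simpa using this
  obtain ⟨b₀, hb₀⟩ := exists_inl_of_commute h'
  refine ⟨b₀, ?_⟩
  have := congrArg (Coprod.swap B A) hb₀
  simpa [Coprod.swap_swap] using this

theorem eq_one_of_inl_eq_inr {a : A} {b : B} (h : (Coprod.inl a : Coprod A B) = Coprod.inr b) :
    a = 1 ∧ b = 1 := by
  constructor
  · have := congrArg (Coprod.fst : Coprod A B →* A) h
    simpa using this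
  · have := congrArg (Coprod.snd : Coprod A B →* B) h
    simpa using this.symm

end Stmt18Aux


namespace Stmt18Aux

open scoped commutatorElement

variable {A : Type*} [Group A]

theorem comm_aux (x y z w : A) (hz : ∀ g : A, z * g = g * z) (hw : ∀ g : A, w * g = g * w) :
    ⁅x * z, y * w⁆ = ⁅x, y⁆ := by
  rw [commutatorElement_def, commutatorElement_def]
  calc (x*z)*(y*w)*(x*z)⁻¹*(y*w)⁻¹
      = x*((z*(y*w))*z⁻¹)*x⁻¹*(y*w)⁻¹ := by group
    _ = x*(((y*w)*z)*z⁻¹)*x⁻¹*(y*w)⁻¹ := by rw [hz (y*w)]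
    _ = x*y*((w*x⁻¹)*w⁻¹)*y⁻¹ := by group
    _ = x*y*((x⁻¹*w)*w⁻¹)*y⁻¹ := by rw [hw x⁻¹]
    _ = x*y*x⁻¹*y⁻¹ := by group

theorem finite_commutatorSet_of_finite_quotient_center
    (hfin : Finite (A ⧸ Subgroup.center A)) : Finite (commutatorSet A) := by
  set Q := A ⧸ Subgroup.center A
  have wd : ∀ (a₁ a₂ b₁ b₂ : A),
      (QuotientGroup.leftRel (Subgroup.center A)) a₁ b₁ →
      (QuotientGroup.leftRel (Subgroup.center A)) a₂ b₂ →
      ⁅a₁, a₂⁆ = ⁅b₁, b₂⁆ := by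
    intro a₁ a₂ b₁ b₂ h1 h2
    rw [QuotientGroup.leftRel_apply] at h1 h2
    have hb₁ : b₁ = a₁ * (a₁⁻¹ * b₁) := by group
    have hb₂ : b₂ = a₂ * (a₂⁻¹ * b₂) := by group
    rw [hb₁, hb₂, comm_aux]
    · exact fun g => ((Subgroup.mem_center_iff.mp h1) g).symm
    · exact fun g => ((Subgroup.mem_center_iff.mp h2) g).symm
  let f : Q × Q → A := fun q => Quotient.liftOn₂' q.1 q.2 (fun x y => ⁅x, y⁆) wd
  have hsub : commutatorSet A ⊆ Set.range f := by
    rintro c ⟨g, h, rfl⟩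
    exact ⟨(QuotientGroup.mk g, QuotientGroup.mk h), rfl⟩
  exact (Set.finite_range f).subset hsub

theorem mul_comm_of_finite_quotient_center (htf : Monoid.IsTorsionFree A)
    (hfin : Finite (A ⧸ Subgroup.center A)) (x y : A) : x * y = y * x := by
  by_contra hxy
  have hc : ⁅x, y⁆ ≠ 1 := fun h => hxy (commutatorElement_eq_one_iff_mul_comm.mp h)
  haveI := finite_commutatorSet_of_finite_quotient_center hfin
  haveI : Finite (_root_.commutator A) := inferInstance
  have hmem : ⁅x, y⁆ ∈ _root_.commutator A := by
    rw [commutator_def]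
    exact Subgroup.commutator_mem_commutator (Subgroup.mem_top x) (Subgroup.mem_top y)
  have hfo : IsOfFinOrder (⟨⁅x, y⁆, hmem⟩ : _root_.commutator A) := isOfFinOrder_of_finite _
  have : IsOfFinOrder ⁅x, y⁆ := Submonoid.isOfFinOrder_coe.mpr hfo
  exact htf _ hc this

end Stmt18Aux


namespace Stmt18Aux

theorem cyclic_or_transvection {A : Type*} [Group A] [Nontrivial A]
    (hcomm : ∀ x y : A, x * y = y * x) (hfg : Group.FG A) (htf : Monoid.IsTorsionFree A) :
    Nonempty (A ≃* Multiplicative ℤ) ∨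
      ∃ (α : MulAut A) (a₀ : A), ∀ k : ℕ, 0 < k → (α ^ k) a₀ ≠ a₀ := by
  letI : CommGroup A := { (inferInstance : Group A) with mul_comm := hcomm }
  haveI : AddGroup.FG (Additive A) := by
    haveI := hfg
    infer_instance
  haveI : Module.Finite ℤ (Additive A) := Module.Finite.iff_addGroup_fg.mpr ‹_›
  haveI : NoZeroSMulDivisors ℤ (Additive A) := by
    refine ⟨fun {n} {v} h => ?_⟩
    by_contra hcon
    push_neg at hcon
    obtain ⟨hn, hv⟩ := hcon
    have hvm : Additive.toMul v ≠ 1 := hv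
    apply htf (Additive.toMul v) hvm
    have hp : (Additive.toMul v) ^ n = 1 := by
      rw [← toMul_zsmul, h]; rfl
    apply isOfFinOrder_iff_pow_eq_one.mpr
    refine ⟨n.natAbs, Int.natAbs_pos.mpr hn, ?_⟩
    rcases Int.natAbs_eq n with he | he
    · rw [← zpow_natCast, ← he, hp]
    · rw [← zpow_natCast, ← neg_neg (n.natAbs : ℤ), ← he, zpow_neg, hp, inv_one]
  haveI : Module.Free ℤ (Additive A) := Module.free_of_finite_type_torsion_free'
  set ι := Module.Free.ChooseBasisIndex ℤ (Additive A) with hι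
  let b : Module.Basis ι ℤ (Additive A) := Module.Free.chooseBasis ℤ (Additive A)
  haveI : Nontrivial (Additive A) := ‹Nontrivial A›
  have hne : Nonempty ι := b.index_nonempty
  by_cases hsub : ∀ i j : ι, i = j
  · -- rank one: A ≃* Multiplicative ℤ
    obtain ⟨i0⟩ := hne
    letI : Unique ι := ⟨⟨i0⟩, fun j => hsub j i0⟩
    let eZ : Additive A ≃+ ℤ :=
      (b.repr.trans (Finsupp.LinearEquiv.finsuppUnique ℤ ℤ ι)).toAddEquiv
    refine Or.inl ⟨{
      toFun := fun a => Multiplicative.ofAdd (eZ (Additive.ofMul a))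
      invFun := fun z => Additive.toMul (eZ.symm (Multiplicative.toAdd z))
      left_inv := fun a => by simp
      right_inv := fun z => by simp
      map_mul' := fun a a' => by
        show Multiplicative.ofAdd (eZ (Additive.ofMul (a * a'))) = _
        have h1 : Additive.ofMul (a * a') = Additive.ofMul a + Additive.ofMul a' := rfl
        rw [h1, map_add]
        rfl }⟩
  · push_neg at hsub
    obtain ⟨i, j, hij⟩ := hsub
    have hji : b.repr (b j) i = 0 := by
      classical
      rw [b.repr_self_apply]
      simp [Ne.symm hij, if_neg]
    have hii : b.repr (b i) i = 1 := by
      classical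
      rw [b.repr_self_apply]
      simp
    let σ : Additive A ≃+ Additive A :=
      { toFun := fun v => v + (b.repr v i) • b j
        invFun := fun v => v - (b.repr v i) • b j
        left_inv := fun v => by
          simp only [map_add, map_smul, Finsupp.add_apply, Finsupp.smul_apply, hji, smul_eq_mul,
            mul_zero, add_zero]
          abel
        right_inv := fun v => by
          simp only [map_sub, map_smul, Finsupp.sub_apply, Finsupp.smul_apply, hji, smul_eq_mul,
            mul_zero, sub_zero]
          abel
        map_add' := fun v w => by
          simp only [map_add, Finsupp.add_apply, add_smul]
          abel }
    let α : MulAut A :=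
      { toFun := fun a => Additive.toMul (σ (Additive.ofMul a))
        invFun := fun a => Additive.toMul (σ.symm (Additive.ofMul a))
        left_inv := fun a => by simp
        right_inv := fun a => by simp
        map_mul' := fun a a' => by
          show Additive.toMul (σ (Additive.ofMul (a * a'))) = _
          have h1 : Additive.ofMul (a * a') = Additive.ofMul a + Additive.ofMul a' := rfl
          rw [h1, map_add]
          rfl }
    refine Or.inr ⟨α, Additive.toMul (b i), ?_⟩
    have key : ∀ k : ℕ, (α ^ k) (Additive.toMul (b i)) =
        Additive.toMul (b i + (k : ℤ) • b j) := by
      intro k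
      induction k with
      | zero => simp
      | succ k ih =>
        rw [pow_succ', MulAut.mul_apply, ih]
        show Additive.toMul (σ (b i + (k : ℤ) • b j)) = _
        have : σ (b i + (k : ℤ) • b j) = b i + ((k : ℤ) + 1) • b j := by
          show (b i + (k : ℤ) • b j) + (b.repr (b i + (k : ℤ) • b j) i) • b j = _
          rw [map_add, map_smul, Finsupp.add_apply, Finsupp.smul_apply, hii, hji]
          simp only [smul_eq_mul, mul_zero, add_zero]
          rw [add_smul, one_smul]
          abel
        rw [this]
        push_cast
        ring_nf
    intro k hk hcon
    rw [key k] at hcon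
    have : b i + (k : ℤ) • b j = b i := hcon
    have hz : (k : ℤ) • b j = 0 := by
      have := congrArg (fun t => t - b i) this
      simpa [add_comm] using this
    rcases smul_eq_zero.mp hz with h | h
    · exact absurd h (by exact_mod_cast Nat.pos_iff_ne_zero.mp hk)
    · exact b.ne_zero j h

end Stmt18Aux


open Monoid

namespace Stmt18Aux

variable {A : Type*} {B : Type*} [Group A] [Group B]

/-- Functoriality of `MulAut` along a `MulEquiv`. -/
def transAut {G H : Type*} [Group G] [Group H] (e : G ≃* H) : MulAut H →* MulAut G where
  toFun ψ := (e.trans ψ).trans e.symm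
  map_one' := by
    ext x
    simp
  map_mul' ψ₁ ψ₂ := by
    ext x
    simp [MulAut.mul_apply]

theorem exists_conj_eq {G H : Type*} [Group G] [Group H] (e : G ≃* H) {ψ : MulAut H}
    (h : transAut e ψ ∈ (MulAut.conj : G →* MulAut G).range) :
    ∃ p : H, ∀ y : H, ψ y = p * y * p⁻¹ := by
  obtain ⟨g, hg⟩ := h
  refine ⟨e g, fun y => ?_⟩
  have h1 : (MulAut.conj g) (e.symm y) = (transAut e ψ) (e.symm y) := by rw [hg]
  have h2 : g * e.symm y * g⁻¹ = e.symm (ψ y) := by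
    simpa [transAut, MulAut.conj_apply] using h1
  have := congrArg e h2
  simpa [map_mul] using this.symm

/-- Extension of an automorphism of `A` to `A ∗ B` (identity on `B`), as a hom of groups. -/
def mapAutHom : MulAut A →* MulAut (Coprod A B) where
  toFun α :=
    { toFun := Coprod.map α.toMonoidHom (MonoidHom.id B)
      invFun := Coprod.map α.symm.toMonoidHom (MonoidHom.id B)
      left_inv := fun x => by
        rw [Coprod.map_map]
        have h1 : (α.symm.toMonoidHom.comp α.toMonoidHom) = MonoidHom.id A :=
          MonoidHom.ext fun a => α.symm_apply_apply a
        have h2 : ((MonoidHom.id B).comp (MonoidHom.id B)) = MonoidHom.id B := rfl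
        rw [h1, h2, Coprod.map_id_id]
        rfl
      right_inv := fun x => by
        rw [Coprod.map_map]
        have h1 : (α.toMonoidHom.comp α.symm.toMonoidHom) = MonoidHom.id A :=
          MonoidHom.ext fun a => α.apply_symm_apply a
        have h2 : ((MonoidHom.id B).comp (MonoidHom.id B)) = MonoidHom.id B := rfl
        rw [h1, h2, Coprod.map_id_id]
        rfl
      map_mul' := map_mul _ }
  map_one' := by
    ext x
    show Coprod.map _ _ x = x
    rw [show ((1 : MulAut A)).toMonoidHom = MonoidHom.id A from rfl, Coprod.map_id_id]
    rfl
  map_mul' α β := by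
    ext x
    show Coprod.map _ _ x = Coprod.map _ _ (Coprod.map _ _ x)
    rw [Coprod.map_map]
    rfl

theorem mapAutHom_apply (α : MulAut A) (x : Coprod A B) :
    (mapAutHom α) x = Coprod.map α.toMonoidHom (MonoidHom.id B) x := rfl

end Stmt18Aux

namespace Stmt18Aux

variable {A : Type*} {B : Type*} [Group A] [Group B]

theorem twist_inner_imp_central {G : Type*} [Group G] [Nontrivial A] [Nontrivial B]
    (e : G ≃* Coprod A B) {c : A}
    (h : transAut e (mapAutHom (B := B) (MulAut.conj c)) ∈ (MulAut.conj : G →* MulAut G).range) :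
    c ∈ Subgroup.center A := by
  obtain ⟨p, hp⟩ := exists_conj_eq e h
  -- p centralizes inr B
  have hpB : ∀ b : B, p * Coprod.inr b = Coprod.inr b * p := by
    intro b
    have := hp (Coprod.inr b)
    rw [mapAutHom_apply, Coprod.map_apply_inr] at this
    simp only [MonoidHom.id_apply] at this
    have := congrArg (· * p) this
    simpa [mul_assoc] using this.symm
  obtain ⟨b₀, hb₀⟩ := exists_inr_of_commute hpB
  -- q := p⁻¹ * inl c centralizes inl A
  have hpA : ∀ a : A, Coprod.inl (c * a * c⁻¹) = p * Coprod.inl a * p⁻¹ := by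
    intro a
    have := hp (Coprod.inl a)
    rwa [mapAutHom_apply, Coprod.map_apply_inl] at this
  have hq : ∀ a : A, (p⁻¹ * Coprod.inl c) * Coprod.inl a = Coprod.inl a * (p⁻¹ * Coprod.inl c) := by
    intro a
    have h1 : Coprod.inl a = p⁻¹ * Coprod.inl (c * a * c⁻¹) * p := by
      rw [hpA a]; group
    calc (p⁻¹ * Coprod.inl c) * Coprod.inl a
        = p⁻¹ * (Coprod.inl c * Coprod.inl a * (Coprod.inl c)⁻¹) * Coprod.inl c := by
          group
      _ = p⁻¹ * Coprod.inl (c * a * c⁻¹) * Coprod.inl c := by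
          rw [← map_inv, ← map_mul, ← map_mul]
      _ = (p⁻¹ * Coprod.inl (c * a * c⁻¹) * p) * (p⁻¹ * Coprod.inl c) := by group
      _ = Coprod.inl a * (p⁻¹ * Coprod.inl c) := by rw [← h1]
  obtain ⟨a₁, ha₁⟩ := exists_inl_of_commute hq
  -- deduce p = 1
  have hpeq : p = Coprod.inl c * (Coprod.inl a₁)⁻¹ := by
    rw [← ha₁]; group
  have hinlinr : (Coprod.inl (c * a₁⁻¹) : Coprod A B) = Coprod.inr b₀ := by
    rw [map_mul, map_inv, ← hpeq, hb₀]
  have hp1 : p = 1 := by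
    rw [hb₀, ((eq_one_of_inl_eq_inr hinlinr).2 : b₀ = 1), map_one]
  rw [Subgroup.mem_center_iff]
  intro g
  have := hpA g
  rw [hp1] at this
  simp only [one_mul, inv_one, mul_one] at this
  have := Coprod.inl_injective this
  have hgc : c * g * c⁻¹ = g := this
  calc g * c = (c * g * c⁻¹) * c := by rw [hgc]
    _ = c * g := by group

end Stmt18Aux

namespace Stmt18Aux

variable {A : Type*} {B : Type*} [Group A] [Group B]

theorem case_noncomm {G : Type*} [Group G] [Nontrivial A] [Nontrivial B]
    (htfA : Monoid.IsTorsionFree A) (hA : ¬ ∀ x y : A, x * y = y * x)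
    (e : G ≃* Coprod A B) :
    Infinite (MulAut G ⧸ (MulAut.conj : G →* MulAut G).range) := by
  have hinf : Infinite (A ⧸ Subgroup.center A) := by
    rw [← not_finite_iff_infinite]
    intro hfin
    exact hA fun x y => mul_comm_of_finite_quotient_center htfA hfin x y
  -- the composite twist homomorphism
  set Ψ : A →* MulAut G :=
    (transAut e).comp ((mapAutHom (B := B)).comp (MulAut.conj : A →* MulAut A)) with hΨ
  have hker : ∀ c : A, (Ψ c ∈ (MulAut.conj : G →* MulAut G).range) → c ∈ Subgroup.center A :=
    fun c h => twist_inner_imp_central e h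
  -- well-definedness on the quotient
  have wd : ∀ a b : A, (QuotientGroup.leftRel (Subgroup.center A)) a b →
      (QuotientGroup.mk (Ψ a) : MulAut G ⧸ (MulAut.conj : G →* MulAut G).range) =
        QuotientGroup.mk (Ψ b) := by
    intro a b hab
    rw [QuotientGroup.leftRel_apply] at hab
    apply QuotientGroup.eq.mpr
    have : (Ψ a)⁻¹ * Ψ b = Ψ (a⁻¹ * b) := by rw [map_mul, map_inv]
    rw [this]
    -- a⁻¹ * b is central, so its twist is trivial
    have hcomm := Subgroup.mem_center_iff.mp hab
    have hconj : (MulAut.conj (a⁻¹ * b) : MulAut A).toMonoidHom = MonoidHom.id A := by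
      ext x
      simp only [MulEquiv.toMonoidHom_eq_coe, MonoidHom.coe_coe, MulAut.conj_apply,
        MonoidHom.id_apply]
      rw [← hcomm x]
      group
    have hmap1 : mapAutHom (B := B) (MulAut.conj (a⁻¹ * b)) = 1 := by
      ext y
      show Coprod.map _ _ y = y
      rw [hconj, Coprod.map_id_id]
      rfl
    have hΨ1 : Ψ (a⁻¹ * b) = 1 := by
      show transAut e (mapAutHom (B := B) (MulAut.conj (a⁻¹ * b))) = 1
      rw [hmap1, map_one]
    exact ⟨1, by rw [map_one, hΨ1]⟩
  let f : (A ⧸ Subgroup.center A) → (MulAut G ⧸ (MulAut.conj : G →* MulAut G).range) :=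
    fun q => Quotient.liftOn' q (fun a => QuotientGroup.mk (Ψ a)) wd
  have finj : Function.Injective f := by
    intro q₁ q₂ hq
    induction q₁ using Quotient.inductionOn' with | h a =>
    induction q₂ using Quotient.inductionOn' with | h b =>
    have : (QuotientGroup.mk (Ψ a) : MulAut G ⧸ (MulAut.conj : G →* MulAut G).range) =
        QuotientGroup.mk (Ψ b) := hq
    have hmem : (Ψ a)⁻¹ * Ψ b ∈ (MulAut.conj : G →* MulAut G).range :=
      QuotientGroup.eq.mp this
    have : Ψ (a⁻¹ * b) ∈ (MulAut.conj : G →* MulAut G).range := by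
      rwa [map_mul, map_inv]
    have hc := hker _ this
    apply Quotient.sound'
    rwa [QuotientGroup.leftRel_apply]
  exact Infinite.of_injective f finj

end Stmt18Aux

namespace Stmt18Aux

variable {A : Type*} {B : Type*} [Group A] [Group B]

theorem infinite_out_of_toProd_moving {G : Type*} [Group G]
    (hcA : ∀ x y : A, x * y = y * x) (hcB : ∀ x y : B, x * y = y * x)
    (e : G ≃* Coprod A B) (ψ : MulAut (Coprod A B)) (x : Coprod A B)
    (hx : ∀ k : ℕ, 0 < k → Coprod.toProd ((ψ ^ k) x) ≠ Coprod.toProd x) :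
    Infinite (MulAut G ⧸ (MulAut.conj : G →* MulAut G).range) := by
  have hcP : ∀ u v : A × B, u * v = v * u := fun u v =>
    Prod.ext_iff.mpr ⟨hcA _ _, hcB _ _⟩
  set φ : MulAut G := transAut e ψ with hφ
  let f : ℕ → MulAut G ⧸ (MulAut.conj : G →* MulAut G).range :=
    fun n => QuotientGroup.mk (φ ^ n)
  have key : ∀ k : ℕ, 0 < k → φ ^ k ∉ (MulAut.conj : G →* MulAut G).range := by
    intro k hk hmem
    rw [hφ, ← map_pow] at hmem
    obtain ⟨p, hp⟩ := exists_conj_eq e hmem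
    apply hx k hk
    rw [hp x]
    have hconj : ∀ u w : A × B, u * w * u⁻¹ = w := fun u w => by
      rw [hcP u w]; group
    rw [map_mul, map_mul, map_inv]
    rw [hconj]
  have finj : Function.Injective f := by
    intro m n hmn
    rcases lt_trichotomy m n with h | h | h
    · exfalso
      have hmem : (φ ^ m)⁻¹ * φ ^ n ∈ (MulAut.conj : G →* MulAut G).range :=
        QuotientGroup.eq.mp hmn
      have hpow : (φ ^ m)⁻¹ * φ ^ n = φ ^ (n - m) := by
        have h1 : φ ^ m * φ ^ (n - m) = φ ^ n := by
          rw [← pow_add]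
          congr 1
          omega
        rw [← h1]
        group
      exact key (n - m) (by omega) (hpow ▸ hmem)
    · exact h
    · exfalso
      have hmem : (φ ^ n)⁻¹ * φ ^ m ∈ (MulAut.conj : G →* MulAut G).range :=
        QuotientGroup.eq.mp hmn.symm
      have hpow : (φ ^ n)⁻¹ * φ ^ m = φ ^ (m - n) := by
        have h1 : φ ^ n * φ ^ (m - n) = φ ^ m := by
          rw [← pow_add]
          congr 1
          omega
        rw [← h1]
        group
      exact key (m - n) (by omega) (hpow ▸ hmem)
  exact Infinite.of_injective f finj

theorem case_two_transvection {G : Type*} [Group G]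
    (hcA : ∀ x y : A, x * y = y * x) (hcB : ∀ x y : B, x * y = y * x)
    (e : G ≃* Coprod A B) (α : MulAut A) (a₀ : A) (hα : ∀ k : ℕ, 0 < k → (α ^ k) a₀ ≠ a₀) :
    Infinite (MulAut G ⧸ (MulAut.conj : G →* MulAut G).range) := by
  apply infinite_out_of_toProd_moving hcA hcB e (mapAutHom α) (Coprod.inl a₀)
  intro k hk
  have hpow : ∀ j : ℕ, ((mapAutHom (B := B) α) ^ j) (Coprod.inl a₀) = Coprod.inl ((α ^ j) a₀) := by
    intro j
    induction j with
    | zero => simp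
    | succ j ih =>
      rw [pow_succ', MulAut.mul_apply, ih, mapAutHom_apply, Coprod.map_apply_inl]
      rw [pow_succ', MulAut.mul_apply]
      rfl
  rw [hpow k]
  intro hcon
  have := congrArg Prod.fst hcon
  simp only [Coprod.toProd_apply_inl] at this
  exact hα k hk this

theorem case_two_cyclic {G : Type*} [Group G] [Nontrivial B]
    (hcA : ∀ x y : A, x * y = y * x) (hcB : ∀ x y : B, x * y = y * x)
    (e : G ≃* Coprod A B) (ζ : A ≃* Multiplicative ℤ) (htfB : Monoid.IsTorsionFree B) :
    Infinite (MulAut G ⧸ (MulAut.conj : G →* MulAut G).range) := by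
  obtain ⟨b, hb⟩ := exists_ne (1 : B)
  set x₀ : A := ζ.symm (Multiplicative.ofAdd 1) with hx₀
  have hζx₀ : ζ x₀ = Multiplicative.ofAdd 1 := ζ.apply_symm_apply _
  have hgen : ∀ a : A, a = x₀ ^ (Multiplicative.toAdd (ζ a)) := by
    intro a
    apply ζ.injective
    rw [map_zpow, hζx₀]
    rw [← ofAdd_zsmul]
    simp
  set pP : Coprod A B := Coprod.inl x₀ * Coprod.inr b with hpP
  set pN : Coprod A B := Coprod.inl x₀ * Coprod.inr b⁻¹ with hpN
  set phiP : Coprod A B →* Coprod A B :=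
    Coprod.lift ((zpowersHom _ pP).comp ζ.toMonoidHom) Coprod.inr with hphiP
  set phiN : Coprod A B →* Coprod A B :=
    Coprod.lift ((zpowersHom _ pN).comp ζ.toMonoidHom) Coprod.inr with hphiN
  have hvalP : ∀ a : A, phiP (Coprod.inl a) = pP ^ (Multiplicative.toAdd (ζ a)) := fun a => by
    rw [hphiP, Coprod.lift_apply_inl]; rfl
  have hvalN : ∀ a : A, phiN (Coprod.inl a) = pN ^ (Multiplicative.toAdd (ζ a)) := fun a => by
    rw [hphiN, Coprod.lift_apply_inl]; rfl
  have hvalrP : ∀ b' : B, phiP (Coprod.inr b') = Coprod.inr b' := fun b' => by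
    rw [hphiP, Coprod.lift_apply_inr]
  have hvalrN : ∀ b' : B, phiN (Coprod.inr b') = Coprod.inr b' := fun b' => by
    rw [hphiN, Coprod.lift_apply_inr]
  have hx₀1 : Multiplicative.toAdd (ζ x₀) = 1 := by rw [hζx₀]; rfl
  have hphiNpP : phiN pP = Coprod.inl x₀ := by
    rw [hpP, map_mul, hvalN, hvalrN, hx₀1, zpow_one, hpN]
    rw [mul_assoc, ← map_mul, inv_mul_cancel, map_one, mul_one]
  have hphiPpN : phiP pN = Coprod.inl x₀ := by
    rw [hpN, map_mul, hvalP, hvalrP, hx₀1, zpow_one, hpP]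
    rw [mul_assoc, ← map_mul, mul_inv_cancel, map_one, mul_one]
  have hleft : ∀ x, phiN (phiP x) = x := by
    have : phiN.comp phiP = MonoidHom.id _ := by
      apply Coprod.hom_ext
      · ext a
        simp only [MonoidHom.comp_apply, MonoidHom.id_apply]
        rw [hvalP, map_zpow, hphiNpP, ← map_zpow, ← hgen a]
      · ext b'
        simp only [MonoidHom.comp_apply, MonoidHom.id_apply]
        rw [hvalrP, hvalrN]
    exact fun x => DFunLike.congr_fun this x
  have hright : ∀ x, phiP (phiN x) = x := by
    have : phiP.comp phiN = MonoidHom.id _ := by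
      apply Coprod.hom_ext
      · ext a
        simp only [MonoidHom.comp_apply, MonoidHom.id_apply]
        rw [hvalN, map_zpow, hphiPpN, ← map_zpow, ← hgen a]
      · ext b'
        simp only [MonoidHom.comp_apply, MonoidHom.id_apply]
        rw [hvalrN, hvalrP]
    exact fun x => DFunLike.congr_fun this x
  set ψ : MulAut (Coprod A B) :=
    { toFun := phiP
      invFun := phiN
      left_inv := hleft
      right_inv := hright
      map_mul' := map_mul phiP } with hψ
  apply infinite_out_of_toProd_moving hcA hcB e ψ (Coprod.inl x₀)
  have hψapp : ∀ x, ψ x = phiP x := fun x => rfl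
  have hxk : ∀ k : ℕ, (ψ ^ k) (Coprod.inl x₀) = Coprod.inl x₀ * Coprod.inr (b ^ k) := by
    intro k
    induction k with
    | zero => simp
    | succ k ih =>
      rw [pow_succ', MulAut.mul_apply, ih, hψapp, map_mul, hvalP, hx₀1, zpow_one, hvalrP, hpP]
      rw [mul_assoc, ← map_mul, ← pow_succ']
  intro k hk hcon
  rw [hxk k] at hcon
  have : b ^ k = 1 := by
    have h2 := congrArg Prod.snd hcon
    simpa using h2
  exact htfB b hb (isOfFinOrder_iff_pow_eq_one.mpr ⟨k, hk, this⟩)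

end Stmt18Aux

namespace Stmt18Aux

variable {A : Type*} {B : Type*} [Group A] [Group B]

theorem case_two {G : Type*} [Group G] [Nontrivial A] [Nontrivial B]
    (hfg : Group.FG G) (htfA : Monoid.IsTorsionFree A) (htfB : Monoid.IsTorsionFree B)
    (hcA : ∀ x y : A, x * y = y * x) (hcB : ∀ x y : B, x * y = y * x)
    (e : G ≃* Coprod A B) :
    Infinite (MulAut G ⧸ (MulAut.conj : G →* MulAut G).range) := by
  haveI := hfg
  have hfgA : Group.FG A := by
    apply Group.fg_of_surjective (f := (Coprod.fst : Coprod A B →* A).comp e.toMonoidHom)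
    intro a
    obtain ⟨x, hx⟩ := Coprod.fst_surjective (N := B) a
    exact ⟨e.symm x, by simp [MonoidHom.comp_apply, hx]⟩
  rcases cyclic_or_transvection hcA hfgA htfA with ⟨⟨ζ⟩⟩ | ⟨α, a₀, hα⟩
  · exact case_two_cyclic hcA hcB e ζ htfB
  · exact case_two_transvection hcA hcB e α a₀ hα

def swapEquiv : Coprod A B ≃* Coprod B A :=
  { toFun := Coprod.swap A B
    invFun := Coprod.swap B A
    left_inv := Coprod.swap_swap
    right_inv := Coprod.swap_swap
    map_mul' := map_mul _ }

end Stmt18Aux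

/-- A finitely generated torsion-free group which is a nontrivial free product has infinite
outer automorphism group `Aut(G)/Inn(G)`. -/
theorem stmt18 {G : Type*} [Group G] (hfg : Group.FG G) (htf : ∀ g : G, g ≠ 1 → ¬IsOfFinOrder g)
    {A B : Type*} [Group A] [Group B] [Nontrivial A] [Nontrivial B]
    (e : G ≃* Monoid.Coprod A B) :
    Infinite (MulAut G ⧸ (MulAut.conj : G →* MulAut G).range) := by
  have htfA : Monoid.IsTorsionFree A := by
    intro a ha hfo
    set j : A →* G := e.symm.toMonoidHom.comp (Monoid.Coprod.inl : A →* Monoid.Coprod A B) with hj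
    have hinj : Function.Injective j := e.symm.injective.comp Monoid.Coprod.inl_injective
    have hne : j a ≠ 1 := fun h1 => ha (hinj (h1.trans (map_one j).symm))
    exact htf (j a) hne (j.isOfFinOrder hfo)
  have htfB : Monoid.IsTorsionFree B := by
    intro b hb hfo
    set j : B →* G := e.symm.toMonoidHom.comp (Monoid.Coprod.inr : B →* Monoid.Coprod A B) with hj
    have hinj : Function.Injective j := e.symm.injective.comp Monoid.Coprod.inr_injective
    have hne : j b ≠ 1 := fun h1 => hb (hinj (h1.trans (map_one j).symm))
    exact htf (j b) hne (j.isOfFinOrder hfo)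
  by_cases hcA : ∀ x y : A, x * y = y * x
  · by_cases hcB : ∀ x y : B, x * y = y * x
    · exact Stmt18Aux.case_two hfg htfA htfB hcA hcB e
    · exact Stmt18Aux.case_noncomm htfB hcB (e.trans Stmt18Aux.swapEquiv)
  · exact Stmt18Aux.case_noncomm htfA hcA e
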